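/- For every positive integer n, the determinant of the 3×3 matrix M with rows (1, 1/3, 1/5), (1/(1+n), 1/(3(3+n)), 1/(5(5+n))), and (1/((1+2n)(1+n)), 1/(3(3+2n)(3+n)), 1/(5(5+2n)(5+n))) equals −16 / (15(n+1)(n+3)(n+5)(1+2n)(3+2n)(5+2n)); in particular M is nonsingular. -/

import Mathlib

open Matrix

/-- For every positive integer `n`, the determinant of the `3×3` matrix `M` with rows
`(1, 1/3, 1/5)`, `(1/(1+n), 1/(3(3+n)), 1/(5(5+n)))` and
`(1/((1+2n)(1+n)), 1/(3(3+2n)(3+n)), 1/(5(5+2n)(5+n)))` equals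
`−16/(15(n+1)(n+3)(n+5)(1+2n)(3+2n)(5+2n))`; in particular `M` is nonsingular. -/
theorem det_moment_matrix (n : ℕ) (hn : 0 < n) :
    (!![(1 : ℝ), 1 / 3, 1 / 5;
        1 / (1 + (n : ℝ)), 1 / (3 * (3 + (n : ℝ))), 1 / (5 * (5 + (n : ℝ)));
        1 / ((1 + 2 * (n : ℝ)) * (1 + (n : ℝ))), 1 / (3 * (3 + 2 * (n : ℝ)) * (3 + (n : ℝ))),
          1 / (5 * (5 + 2 * (n : ℝ)) * (5 + (n : ℝ)))]).det =
      -16 / (15 * ((n : ℝ) + 1) * ((n : ℝ) + 3) * ((n : ℝ) + 5) *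
        (1 + 2 * (n : ℝ)) * (3 + 2 * (n : ℝ)) * (5 + 2 * (n : ℝ))) ∧
    (!![(1 : ℝ), 1 / 3, 1 / 5;
        1 / (1 + (n : ℝ)), 1 / (3 * (3 + (n : ℝ))), 1 / (5 * (5 + (n : ℝ)));
        1 / ((1 + 2 * (n : ℝ)) * (1 + (n : ℝ))), 1 / (3 * (3 + 2 * (n : ℝ)) * (3 + (n : ℝ))),
          1 / (5 * (5 + 2 * (n : ℝ)) * (5 + (n : ℝ)))]).det ≠ 0 := by

  have h0 : (0:ℝ) ≤ (n:ℝ) := Nat.cast_nonneg n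
  have h1 : (1 + (n:ℝ)) ≠ 0 := by positivity
  have h3 : (3 + (n:ℝ)) ≠ 0 := by positivity
  have h5 : (5 + (n:ℝ)) ≠ 0 := by positivity
  have h1' : (1 + 2*(n:ℝ)) ≠ 0 := by positivity
  have h3' : (3 + 2*(n:ℝ)) ≠ 0 := by positivity
  have h5' : (5 + 2*(n:ℝ)) ≠ 0 := by positivity
  have hdet : (!![(1 : ℝ), 1 / 3, 1 / 5;
        1 / (1 + (n : ℝ)), 1 / (3 * (3 + (n : ℝ))), 1 / (5 * (5 + (n : ℝ)));
        1 / ((1 + 2 * (n : ℝ)) * (1 + (n : ℝ))), 1 / (3 * (3 + 2 * (n : ℝ)) * (3 + (n : ℝ))),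
          1 / (5 * (5 + 2 * (n : ℝ)) * (5 + (n : ℝ)))]).det =
      -16 / (15 * ((n : ℝ) + 1) * ((n : ℝ) + 3) * ((n : ℝ) + 5) *
        (1 + 2 * (n : ℝ)) * (3 + 2 * (n : ℝ)) * (5 + 2 * (n : ℝ))) := by
    rw [Matrix.det_fin_three]
    simp only [Matrix.of_apply, Matrix.cons_val', Matrix.cons_val_zero, Matrix.cons_val_one, Matrix.cons_val_two, Matrix.empty_val', Matrix.cons_val_fin_one, Matrix.head_cons, Matrix.tail_cons, Matrix.vecHead]
    field_simp
    ring
  refine ⟨hdet, ?_⟩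
  rw [hdet]
  have : (15 * ((n : ℝ) + 1) * ((n : ℝ) + 3) * ((n : ℝ) + 5) *
        (1 + 2 * (n : ℝ)) * (3 + 2 * (n : ℝ)) * (5 + 2 * (n : ℝ))) > 0 := by positivity
  intro h
  rw [div_eq_zero_iff] at h
  rcases h with h | h
  · norm_num at h
  · exact this.ne' h
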